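/- Let U, V be open subsets of a complex Banach space E with V ⊆ U, v a weight on U∪V, h : V → U holomorphic with c_v(h) := sup_{x∈V} v(x)/v(h(x)) < ∞, and f ∈ H^∞_v(U,F). Then f∘h ∈ H^∞_v(V,F) with ‖f∘h‖_v ≤ c_v(h)·‖f‖_v. -/

import Mathlib

/-- Composition with a holomorphic `h : V → U` satisfying
`c_v(h) = sup_{x∈V} v(x)/v(h(x)) ≤ c < ∞`: if `f ∈ H^∞_v(U,F)` then
`f∘h ∈ H^∞_v(V,F)` with `‖f∘h‖_v ≤ c_v(h)·‖f‖_v`. -/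
theorem stmt12 {E F : Type*} [NormedAddCommGroup E] [NormedSpace ℂ E]
    [NormedAddCommGroup F] [NormedSpace ℂ F]
    (U V : Set E) (hU : IsOpen U) (hV : IsOpen V) (hVU : V ⊆ U)
    (v : E → ℝ) (hv : ContinuousOn v U) (hvpos : ∀ x ∈ U, 0 < v x)
    (h : E → E) (hh : DifferentiableOn ℂ h V) (hmaps : Set.MapsTo h V U)
    (c : ℝ) (hc : ∀ x ∈ V, v x / v (h x) ≤ c)
    (f : E → F) (hf : DifferentiableOn ℂ f U)
    (M : ℝ) (hM0 : 0 ≤ M) (hM : ∀ x ∈ U, v x * ‖f x‖ ≤ M) :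
    DifferentiableOn ℂ (fun x => f (h x)) V ∧
      ∀ x ∈ V, v x * ‖f (h x)‖ ≤ c * M := by
  constructor
  · exact hf.comp hh hmaps
  · intro x hx
    have hxU : x ∈ U := hVU hx
    have hhxU : h x ∈ U := hmaps hx
    have hvhx : 0 < v (h x) := hvpos _ hhxU
    have hvx : 0 < v x := hvpos _ hxU
    have key : v x * ‖f (h x)‖ = (v x / v (h x)) * (v (h x) * ‖f (h x)‖) := by
      field_simp
    rw [key]
    have h1 : v x / v (h x) ≤ c := hc x hx
    have h2 : v (h x) * ‖f (h x)‖ ≤ M := hM _ hhxU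
    have h3 : 0 ≤ v x / v (h x) := le_of_lt (div_pos hvx hvhx)
    exact mul_le_mul h1 h2 (by positivity) (le_trans h3 h1)
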